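/- Let p be a prime, q a power of p, and let σ be the affine transformation of F_q^m given by σ(x) = x·J_m + ε_m, where J_m = I + N_m is the m × m unipotent Jordan block and ε_m = (1, 0, ..., 0). Then the order of σ in the group of affine bijections of F_q^m equals p^{1 + ⌊log_p m⌋}. -/
import Mathlib

/-- The `m × m` nilpotent Jordan block: ones on the superdiagonal. -/
def nilJordan (F : Type*) [Field F] (m : ℕ) : Matrix (Fin m) (Fin m) F :=
  fun i j => if (j : ℕ) = (i : ℕ) + 1 then 1 else 0

/-- The affine transformation `σ(x) = x·J_m + ε_m` of `F_q^m`, as an element of the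
monoid of self-maps of `F_q^m` under composition. -/
def sigmaAff (F : Type*) [Field F] (m : ℕ) : Function.End (Fin m → F) :=
  fun x => Matrix.vecMul x (1 + nilJordan F m) + (fun i : Fin m => if (i : ℕ) = 0 then (1 : F) else 0)

section Aux

variable {F : Type*} [Field F]

lemma nilJordan_pow (n k : ℕ) (i j : Fin n) :
    ((nilJordan F n) ^ k) i j = if (j : ℕ) = (i : ℕ) + k then (1:F) else 0 := by
  induction k generalizing j with
  | zero => simp [Matrix.one_apply, Fin.ext_iff, eq_comm]
  | succ k ih =>
    rw [pow_succ, Matrix.mul_apply]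
    by_cases hik : (i:ℕ) + k < n
    · rw [Finset.sum_eq_single (⟨(i:ℕ)+k, hik⟩ : Fin n)]
      · rw [ih]
        simp [nilJordan, add_assoc]
      · intro l _ hl
        rw [ih, if_neg, zero_mul]
        intro h; exact hl (Fin.ext h)
      · simp
    · rw [Finset.sum_eq_zero, if_neg (by have := j.isLt; omega)]
      intro l _
      rw [ih, if_neg (by have := l.isLt; omega), zero_mul]

lemma nilJordan_pow_eq_zero (n k : ℕ) (h : n ≤ k) : (nilJordan F n) ^ k = 0 := by
  ext i j
  rw [nilJordan_pow, if_neg (by have := j.isLt; omega), Matrix.zero_apply]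

lemma vecMul_nilJordan (n : ℕ) (x : Fin n → F) (j : Fin n) :
    Matrix.vecMul x (nilJordan F n) j
      = if h : (j:ℕ) = 0 then 0 else x ⟨(j:ℕ)-1, by have := j.isLt; omega⟩ := by
  simp only [Matrix.vecMul, dotProduct, nilJordan]
  split
  · rename_i h
    apply Finset.sum_eq_zero
    intro l _
    rw [if_neg (by omega), mul_zero]
  · rename_i h
    rw [Finset.sum_eq_single (⟨(j:ℕ)-1, by have := j.isLt; omega⟩ : Fin n)]
    · rw [if_pos (by simp; omega), mul_one]
    · intro l _ hl
      rw [if_neg, mul_zero]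
      intro hc
      exact hl (Fin.ext (by simpa using by omega))
    · simp

lemma vecMul_cons (m : ℕ) (x : Fin m → F) :
    Matrix.vecMul (Fin.cons 1 x) (1 + nilJordan F (m+1)) = Fin.cons 1 (sigmaAff F m x) := by
  funext j
  rw [Matrix.vecMul_add, Matrix.vecMul_one, Pi.add_apply, vecMul_nilJordan]
  refine Fin.cases ?_ (fun jj => ?_) j
  · simp
  · rw [Fin.cons_succ]
    have hne : ((Fin.succ jj : Fin (m+1)) : ℕ) ≠ 0 := by simp
    rw [dif_neg hne, Fin.cons_succ]
    show _ = Matrix.vecMul x (1 + nilJordan F m) jj + _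
    rw [Matrix.vecMul_add, Matrix.vecMul_one, Pi.add_apply, vecMul_nilJordan]
    by_cases h : (jj:ℕ) = 0
    · have h1 : (⟨((Fin.succ jj : Fin (m+1)) : ℕ) - 1, by omega⟩ : Fin (m+1)) = 0 := by
        apply Fin.ext; simp [h]
      rw [h1, Fin.cons_zero, dif_pos h]
      simp [h]
    · have h1 : (⟨((Fin.succ jj : Fin (m+1)) : ℕ) - 1, by omega⟩ : Fin (m+1))
          = Fin.succ ⟨(jj:ℕ)-1, by have := jj.isLt; omega⟩ := by
        apply Fin.ext; simp; omega
      rw [h1, Fin.cons_succ, dif_neg h]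
      simp [h]

lemma vecMul_cons_pow (m k : ℕ) (x : Fin m → F) :
    Matrix.vecMul (Fin.cons 1 x) ((1 + nilJordan F (m+1)) ^ k)
      = Fin.cons 1 (((sigmaAff F m) ^ k) x) := by
  induction k generalizing x with
  | zero => simp [Matrix.vecMul_one]; rfl
  | succ k ih =>
    rw [pow_succ', ← Matrix.vecMul_vecMul, vecMul_cons, ih]
    congr 1

end Aux

/-- The order of `σ : x ↦ x·J_m + ε_m` in the group of affine bijections of `F_q^m`
(here computed in the monoid of self-maps, to which `σ` belongs) is `p^{1 + ⌊log_p m⌋}`. -/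
theorem stmt_5 {p : ℕ} (hp : p.Prime) {F : Type*} [Field F] [Fintype F] [CharP F p]
    (m : ℕ) (hm : 1 ≤ m) :
    orderOf (sigmaAff F m) = p ^ (1 + Nat.log p m) := by
  haveI : Fact p.Prime := ⟨hp⟩
  have hp2 : 2 ≤ p := hp.two_le
  rw [add_comm]
  apply orderOf_eq_prime_pow
  · -- ¬ σ ^ p ^ log = 1
    intro hcon
    set a := Nat.log p m with ha
    have hle : p ^ a ≤ m := Nat.pow_log_le_self p (by omega)
    have hpa : 1 ≤ p ^ a := Nat.one_le_pow _ _ (by omega)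
    have key := vecMul_cons_pow (F := F) m (p ^ a) 0
    rw [hcon] at key
    have hM : (1 + nilJordan F (m+1)) ^ (p ^ a) = 1 + (nilJordan F (m+1)) ^ (p ^ a) := by
      rw [add_pow_char_pow_of_commute p _ (Commute.one_left _), one_pow]
    rw [hM] at key
    have key2 := congrFun key (⟨p ^ a, by omega⟩ : Fin (m+1))
    rw [Matrix.vecMul_add, Matrix.vecMul_one, Pi.add_apply] at key2
    have hsum : Matrix.vecMul (Fin.cons 1 (0 : Fin m → F))
        ((nilJordan F (m+1)) ^ (p ^ a)) (⟨p ^ a, by omega⟩ : Fin (m+1)) = 1 := by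
      simp only [Matrix.vecMul, dotProduct]
      rw [Finset.sum_eq_single (0 : Fin (m+1))]
      · rw [Fin.cons_zero, nilJordan_pow]
        simp
      · intro l _ hl
        rw [nilJordan_pow, if_neg, mul_zero]
        simp only []
        have : (l : ℕ) ≠ 0 := fun hc => hl (Fin.ext hc)
        omega
      · simp
    have hj : (⟨p ^ a, by omega⟩ : Fin (m+1)) = Fin.succ ⟨p ^ a - 1, by omega⟩ := by
      apply Fin.ext; simp; omega
    rw [hsum, hj, Fin.cons_succ, Fin.cons_succ] at key2
    rw [show ((1 : Function.End (Fin m → F)) 0) = 0 from rfl] at key2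
    simp at key2
  · -- σ ^ p ^ (log + 1) = 1
    have hlt : m + 1 ≤ p ^ (Nat.log p m + 1) := Nat.lt_pow_succ_log_self (by omega) m
    have hM : (1 + nilJordan F (m+1)) ^ (p ^ (Nat.log p m + 1)) = 1 := by
      rw [add_pow_char_pow_of_commute p _ (Commute.one_left _), one_pow,
        nilJordan_pow_eq_zero _ _ hlt, add_zero]
    funext x
    have key := vecMul_cons_pow m (p ^ (Nat.log p m + 1)) x
    rw [hM, Matrix.vecMul_one] at key
    have := congrArg Fin.tail key
    rw [Fin.tail_cons, Fin.tail_cons] at this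
    exact this.symm
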